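/- Let (B, M) be a reduced local ring with B/M uncountable and with distinct minimal primes Q₁, Q₂. Let R be an infinite subring of B with |R| < |B/M| and R ∩ Q₁ = R ∩ Q₂. Then for every finitely generated ideal I of R and every c ∈ IB ∩ R, there exists a subring S of B with R ⊆ S, |S| = |R|, S ∩ Q₁ = S ∩ Q₂, and c ∈ IS. -/

import Mathlib

open Cardinal Polynomial

namespace Aux12

variable {B : Type*} [CommRing B]

/-- The gluing condition. -/
def Glued (Q₁ Q₂ : Ideal B) (A : Subring B) : Prop := ∀ y ∈ A, y ∈ Q₁ ↔ y ∈ Q₂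

/-- `a` is "generic" over `A` relative to the prime `Q`. -/
def Gen (A : Subring B) (Q : Ideal B) (a : B) : Prop :=
  ∀ p : Polynomial B, (∀ i, p.coeff i ∈ A) → p.eval a ∈ Q → ∀ i, p.coeff i ∈ Q

/-- Elements of the ring obtained by adjoining `a` to `A` are polynomials in `a`
with coefficients in `A`. -/
lemma mem_closure_insert_iff (A : Subring B) (a y : B) :
    y ∈ Subring.closure (↑A ∪ {a}) ↔
      ∃ p : Polynomial B, (∀ i, p.coeff i ∈ A) ∧ p.eval a = y := by
  constructor
  · intro hy
    induction hy using Subring.closure_induction with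
    | mem x hx =>
      rcases hx with hx | hx
      · refine ⟨C x, fun i => ?_, by simp⟩
        rw [coeff_C]; split
        exacts [hx, A.zero_mem]
      · refine ⟨X, fun i => ?_, by simpa using hx.symm⟩
        rw [coeff_X]; split
        exacts [A.one_mem, A.zero_mem]
    | zero => exact ⟨0, fun i => by rw [coeff_zero]; exact A.zero_mem, by simp⟩
    | one =>
      refine ⟨1, fun i => ?_, by simp⟩
      rw [coeff_one]; split
      exacts [A.one_mem, A.zero_mem]
    | add x z hx hz ihx ihz =>
      obtain ⟨p, hp, hpe⟩ := ihx
      obtain ⟨q, hq, hqe⟩ := ihz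
      exact ⟨p + q, fun i => by rw [coeff_add]; exact A.add_mem (hp i) (hq i), by
        rw [eval_add, hpe, hqe]⟩
    | neg x hx ihx =>
      obtain ⟨p, hp, hpe⟩ := ihx
      exact ⟨-p, fun i => by rw [coeff_neg]; exact A.neg_mem (hp i), by rw [eval_neg, hpe]⟩
    | mul x z hx hz ihx ihz =>
      obtain ⟨p, hp, hpe⟩ := ihx
      obtain ⟨q, hq, hqe⟩ := ihz
      refine ⟨p * q, fun i => ?_, by rw [eval_mul, hpe, hqe]⟩
      rw [coeff_mul]
      exact Subring.sum_mem _ fun c _ => A.mul_mem (hp _) (hq _)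
  · rintro ⟨p, hp, rfl⟩
    rw [eval_eq_sum]
    refine Subring.sum_mem _ fun i _ => Subring.mul_mem _ ?_ (Subring.pow_mem _ ?_ _)
    · exact Subring.subset_closure (Or.inl (hp i))
    · exact Subring.subset_closure (Or.inr rfl)

/-- The set of polynomials with coefficients in `A` has cardinality at most `#A`
(when `A` is infinite). -/
lemma mk_coeffPoly_le (A : Subring B) [Infinite A] :
    #{p : Polynomial B // ∀ i, p.coeff i ∈ A} ≤ #A := by
  have key : #{p : Polynomial B // ∀ i, p.coeff i ∈ A} ≤ #(Polynomial A) := by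
    refine Cardinal.mk_le_of_injective (f := fun p =>
      ∑ i ∈ p.1.support, (monomial i (⟨p.1.coeff i, p.2 i⟩ : A))) ?_
    intro p q h
    have hm : ∀ r : {p : Polynomial B // ∀ i, p.coeff i ∈ A},
        Polynomial.map (A.subtype)
          (∑ i ∈ r.1.support, (monomial i (⟨r.1.coeff i, r.2 i⟩ : A))) = r.1 := by
      intro r
      rw [Polynomial.map_sum]
      simp only [map_monomial]
      exact r.1.sum_monomial_eq
    have := congrArg (Polynomial.map (A.subtype)) h
    rw [hm p, hm q] at this
    exact Subtype.ext this
    -- note: `A.subtype` coerces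
  calc #{p : Polynomial B // ∀ i, p.coeff i ∈ A} ≤ #(Polynomial A) := key
    _ = max #A ℵ₀ := Polynomial.cardinalMk_eq_max
    _ = #A := max_eq_left (Cardinal.aleph0_le_mk A)

/-- Adjoining one element keeps the cardinality of an infinite subring. -/
lemma mk_closure_insert (A : Subring B) [Infinite A] (a : B) :
    #(Subring.closure (↑A ∪ {a})) = #A := by
  refine le_antisymm ?_ (Cardinal.mk_le_mk_of_subset (fun x hx =>
    Subring.subset_closure (Or.inl hx)))
  have hsurj : Function.Surjective
      (fun p : {p : Polynomial B // ∀ i, p.coeff i ∈ A} =>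
        (⟨p.1.eval a, (mem_closure_insert_iff A a _).2 ⟨p.1, p.2, rfl⟩⟩ :
          Subring.closure (↑A ∪ {a}))) := by
    rintro ⟨y, hy⟩
    obtain ⟨p, hp, hpe⟩ := (mem_closure_insert_iff A a y).1 hy
    exact ⟨⟨p, hp⟩, Subtype.ext hpe⟩
  exact (Cardinal.mk_le_of_surjective hsurj).trans (mk_coeffPoly_le A)

/-- Adjoining a doubly generic element preserves gluing. -/
lemma glued_adjoin_gen {Q₁ Q₂ : Ideal B} {A : Subring B} (hA : Glued Q₁ Q₂ A) {a : B}
    (h1 : Gen A Q₁ a) (h2 : Gen A Q₂ a) :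
    Glued Q₁ Q₂ (Subring.closure (↑A ∪ {a})) := by
  have main : ∀ (Qa Qb : Ideal B), Gen A Qa a → Gen A Qb a →
      (∀ y ∈ A, y ∈ Qa → y ∈ Qb) → ∀ y ∈ Subring.closure (↑A ∪ {a}), y ∈ Qa → y ∈ Qb := by
    intro Qa Qb hga hgb hab y hy hyQ
    obtain ⟨p, hp, rfl⟩ := (mem_closure_insert_iff A a y).1 hy
    have hcoeff : ∀ i, p.coeff i ∈ Qb := fun i => hab _ (hp i) (hga p hp hyQ i)
    rw [eval_eq_sum]
    exact Ideal.sum_mem _ fun i _ => Qb.mul_mem_right _ (hcoeff i)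
  intro y hy
  exact ⟨main Q₁ Q₂ h1 h2 (fun z hz => (hA z hz).1) y hy,
    main Q₂ Q₁ h2 h1 (fun z hz => (hA z hz).2) y hy⟩

/-- Adjoining `b` with `t * b = w ∈ A`, `t ∈ A` not in the primes, preserves gluing. -/
lemma glued_adjoin_mul {Q₁ Q₂ : Ideal B} (hp1 : Q₁.IsPrime) (hp2 : Q₂.IsPrime)
    {A : Subring B} (hA : Glued Q₁ Q₂ A) {t w b : B} (ht : t ∈ A) (hw : w ∈ A)
    (ht1 : t ∉ Q₁) (ht2 : t ∉ Q₂) (htb : t * b = w) :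
    Glued Q₁ Q₂ (Subring.closure (↑A ∪ {b})) := by
  intro y hy
  obtain ⟨p, hp, rfl⟩ := (mem_closure_insert_iff A b y).1 hy
  set d := p.natDegree with hd
  set q : B := ∑ i ∈ Finset.range (d + 1), p.coeff i * w ^ i * t ^ (d - i) with hq
  have hqA : q ∈ A := Subring.sum_mem _ fun i _ =>
    A.mul_mem (A.mul_mem (hp i) (A.pow_mem hw i)) (A.pow_mem ht _)
  have hkey : t ^ d * p.eval b = q := by
    rw [eval_eq_sum_range, Finset.mul_sum, hq]
    refine Finset.sum_congr rfl fun i hi => ?_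
    have hid : i ≤ d := Nat.lt_succ_iff.mp (Finset.mem_range.mp hi)
    have : t ^ d = t ^ i * t ^ (d - i) := by
      rw [← pow_add, Nat.add_sub_cancel' hid]
    rw [this, ← htb]
    ring
  have haux : ∀ (Qa Qb : Ideal B), Qa.IsPrime → t ∉ Qa →
      (∀ z ∈ A, z ∈ Qa → z ∈ Qb) → p.eval b ∈ Qa → q ∈ Qb := by
    intro Qa Qb _ _ hab hyQ
    exact hab q hqA (hkey ▸ Ideal.mul_mem_left _ _ hyQ)
  have hback : ∀ (Qb : Ideal B), Qb.IsPrime → t ∉ Qb → q ∈ Qb → p.eval b ∈ Qb := by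
    intro Qb hpb htQb hqQb
    rcases hpb.mem_or_mem (show t ^ d * p.eval b ∈ Qb from hkey ▸ hqQb) with h | h
    · exact absurd (hpb.mem_of_pow_mem _ h) htQb
    · exact h
  constructor
  · intro h
    exact hback Q₂ hp2 ht2 (haux Q₁ Q₂ hp1 ht1 (fun z hz => (hA z hz).1) h)
  · intro h
    exact hback Q₁ hp1 ht1 (haux Q₂ Q₁ hp2 ht2 (fun z hz => (hA z hz).2) h)

/-- The "bad" set of roots of polynomials with coefficients in `A` that are nonzero mod `Q`. -/
lemma mk_bad_le (A : Subring B) [Infinite A] (Q : Ideal B) (hQ : Q.IsPrime) :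
    #{x : B ⧸ Q | ∃ p : Polynomial B, (∀ i, p.coeff i ∈ A) ∧ (∃ i, p.coeff i ∉ Q) ∧
      Polynomial.eval₂ (Ideal.Quotient.mk Q) x p = 0} ≤ #A := by
  haveI := hQ
  haveI : IsDomain (B ⧸ Q) := Ideal.Quotient.isDomain Q
  set PA := {p : Polynomial B // ∀ i, p.coeff i ∈ A}
  have hsub : {x : B ⧸ Q | ∃ p : Polynomial B, (∀ i, p.coeff i ∈ A) ∧ (∃ i, p.coeff i ∉ Q) ∧
        Polynomial.eval₂ (Ideal.Quotient.mk Q) x p = 0} ⊆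
      ⋃ p : PA, {x : B ⧸ Q | (∃ i, p.1.coeff i ∉ Q) ∧
        Polynomial.eval₂ (Ideal.Quotient.mk Q) x p.1 = 0} := by
    rintro x ⟨p, hp, hi, hx⟩
    exact Set.mem_iUnion.2 ⟨⟨p, hp⟩, hi, hx⟩
  have hfin : ∀ p : PA, #{x : B ⧸ Q | (∃ i, p.1.coeff i ∉ Q) ∧
      Polynomial.eval₂ (Ideal.Quotient.mk Q) x p.1 = 0} ≤ ℵ₀ := by
    intro p
    by_cases hi : ∃ i, p.1.coeff i ∉ Q
    · have hne : p.1.map (Ideal.Quotient.mk Q) ≠ 0 := by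
        obtain ⟨i, hiQ⟩ := hi
        intro h
        apply hiQ
        have := congrArg (fun r => Polynomial.coeff r i) h
        simp only [coeff_map, coeff_zero] at this
        exact (Ideal.Quotient.eq_zero_iff_mem).1 this
      have : {x : B ⧸ Q | (∃ i, p.1.coeff i ∉ Q) ∧
          Polynomial.eval₂ (Ideal.Quotient.mk Q) x p.1 = 0} ⊆
          {x : B ⧸ Q | (p.1.map (Ideal.Quotient.mk Q)).IsRoot x} := by
        rintro x ⟨-, hx⟩
        rw [Set.mem_setOf_eq, IsRoot, ← eval₂_eq_eval_map]
        exact hx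
      exact le_trans (Cardinal.mk_le_mk_of_subset this)
        ((Polynomial.finite_setOf_isRoot hne).countable.le_aleph0)
    · have : {x : B ⧸ Q | (∃ i, p.1.coeff i ∉ Q) ∧
          Polynomial.eval₂ (Ideal.Quotient.mk Q) x p.1 = 0} = ∅ := by
        ext x; simp only [Set.mem_setOf_eq, Set.mem_empty_iff_false, iff_false]
        rintro ⟨h, -⟩; exact hi h
      rw [this]
      simp
  calc #{x : B ⧸ Q | ∃ p : Polynomial B, (∀ i, p.coeff i ∈ A) ∧ (∃ i, p.coeff i ∉ Q) ∧
        Polynomial.eval₂ (Ideal.Quotient.mk Q) x p = 0} ≤ #(⋃ p : PA, {x : B ⧸ Q | (∃ i, p.1.coeff i ∉ Q) ∧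
        Polynomial.eval₂ (Ideal.Quotient.mk Q) x p.1 = 0}) := Cardinal.mk_le_mk_of_subset hsub
    _ ≤ #PA * ⨆ p : PA, #{x : B ⧸ Q | (∃ i, p.1.coeff i ∉ Q) ∧
        Polynomial.eval₂ (Ideal.Quotient.mk Q) x p.1 = 0} := Cardinal.mk_iUnion_le _
    _ ≤ #A * ℵ₀ := by
        refine mul_le_mul' (mk_coeffPoly_le A) (ciSup_le' hfin)
    _ = #A := Cardinal.mul_aleph0_eq (Cardinal.aleph0_le_mk A)

section Local

variable [IsLocalRing B]

local notation "M" => IsLocalRing.maximalIdeal B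

/-- Coset avoidance: one can translate `a` by a multiple of `m` to avoid small sets
modulo `Q₁` and modulo `Q₂` simultaneously. -/
lemma exists_avoid [Uncountable (B ⧸ M)] {Q₁ Q₂ : Ideal B}
    (hp1 : Q₁.IsPrime) (hp2 : Q₂.IsPrime) {m : B} (hm1 : m ∉ Q₁) (hm2 : m ∉ Q₂)
    (X₁ : Set (B ⧸ Q₁)) (X₂ : Set (B ⧸ Q₂)) (h1 : #X₁ < #(B ⧸ M)) (h2 : #X₂ < #(B ⧸ M))
    (a : B) :
    ∃ α : B, Ideal.Quotient.mk Q₁ (a + m * α) ∉ X₁ ∧ Ideal.Quotient.mk Q₂ (a + m * α) ∉ X₂ := by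
  by_contra hbad
  push_neg at hbad
  have hQ1M : Q₁ ≤ M := IsLocalRing.le_maximalIdeal hp1.ne_top
  have hQ2M : Q₂ ≤ M := IsLocalRing.le_maximalIdeal hp2.ne_top
  obtain ⟨σ, hσ⟩ : ∃ σ : (B ⧸ M) → B, ∀ z, Ideal.Quotient.mk M (σ z) = z :=
    ⟨Function.surjInv Ideal.Quotient.mk_surjective,
      fun z => Function.surjInv_eq Ideal.Quotient.mk_surjective z⟩
  have hchoice : ∀ z : B ⧸ M,
      Ideal.Quotient.mk Q₁ (a + m * σ z) ∈ X₁ ∨ Ideal.Quotient.mk Q₂ (a + m * σ z) ∈ X₂ := by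
    intro z
    by_cases h : Ideal.Quotient.mk Q₁ (a + m * σ z) ∈ X₁
    · exact Or.inl h
    · exact Or.inr (hbad (σ z) h)
  classical
  set G : (B ⧸ M) → X₁ ⊕ X₂ := fun z =>
    if h : Ideal.Quotient.mk Q₁ (a + m * σ z) ∈ X₁ then Sum.inl ⟨_, h⟩
    else Sum.inr ⟨_, (hchoice z).resolve_left h⟩ with hG
  have hsame : ∀ (Q : Ideal B), Q.IsPrime → m ∉ Q → Q ≤ M → ∀ z w : B ⧸ M,
      Ideal.Quotient.mk Q (a + m * σ z) = Ideal.Quotient.mk Q (a + m * σ w) → z = w := by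
    intro Q hQ hmQ hQM z w h
    rw [Ideal.Quotient.eq] at h
    have : m * (σ z - σ w) ∈ Q := by
      have : a + m * σ z - (a + m * σ w) = m * (σ z - σ w) := by ring
      rwa [this] at h
    have hzw : σ z - σ w ∈ Q := ((hQ.mem_or_mem this).resolve_left hmQ)
    have : σ z - σ w ∈ M := hQM hzw
    rw [← hσ z, ← hσ w, Ideal.Quotient.eq]
    exact this
  have hGinj : Function.Injective G := by
    intro z w h
    rw [hG] at h
    simp only at h
    by_cases h1' : Ideal.Quotient.mk Q₁ (a + m * σ z) ∈ X₁ <;>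
      by_cases h2' : Ideal.Quotient.mk Q₁ (a + m * σ w) ∈ X₁ <;>
        simp only [h1', h2', dif_pos, dif_neg, not_false_iff] at h
    · exact hsame Q₁ hp1 hm1 hQ1M z w (congrArg Subtype.val (Sum.inl.inj h))
    · exact absurd h (by simp)
    · exact absurd h (by simp)
    · exact hsame Q₂ hp2 hm2 hQ2M z w (congrArg Subtype.val (Sum.inr.inj h))
  have : #(B ⧸ M) ≤ #X₁ + #X₂ := by
    have h := Cardinal.mk_le_of_injective hGinj
    rw [Cardinal.mk_sum, Cardinal.lift_id, Cardinal.lift_id] at h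
    exact h
  exact absurd this (not_le.mpr (Cardinal.add_lt_of_lt (Cardinal.aleph0_le_mk _) h1 h2))

/-- Existence of a doubly generic perturbation. -/
lemma exists_gen [Uncountable (B ⧸ M)] {Q₁ Q₂ : Ideal B}
    (hp1 : Q₁.IsPrime) (hp2 : Q₂.IsPrime) (A : Subring B) [Infinite A]
    (hA : #A < #(B ⧸ M)) {m : B} (hm1 : m ∉ Q₁) (hm2 : m ∉ Q₂) (a : B) :
    ∃ α : B, Gen A Q₁ (a + m * α) ∧ Gen A Q₂ (a + m * α) := by
  set X₁ := {x : B ⧸ Q₁ | ∃ p : Polynomial B, (∀ i, p.coeff i ∈ A) ∧ (∃ i, p.coeff i ∉ Q₁) ∧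
      Polynomial.eval₂ (Ideal.Quotient.mk Q₁) x p = 0} with hX₁
  set X₂ := {x : B ⧸ Q₂ | ∃ p : Polynomial B, (∀ i, p.coeff i ∈ A) ∧ (∃ i, p.coeff i ∉ Q₂) ∧
      Polynomial.eval₂ (Ideal.Quotient.mk Q₂) x p = 0} with hX₂
  obtain ⟨α, hα₁, hα₂⟩ := exists_avoid hp1 hp2 hm1 hm2 X₁ X₂
    (lt_of_le_of_lt (mk_bad_le A Q₁ hp1) hA) (lt_of_le_of_lt (mk_bad_le A Q₂ hp2) hA) a
  refine ⟨α, ?_, ?_⟩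
  · intro p hp hev
    by_contra hcon
    push_neg at hcon
    refine hα₁ ⟨p, hp, hcon, ?_⟩
    rw [eval₂_at_apply]
    exact (Ideal.Quotient.eq_zero_iff_mem).2 hev
  · intro p hp hev
    by_contra hcon
    push_neg at hcon
    refine hα₂ ⟨p, hp, hcon, ?_⟩
    rw [eval₂_at_apply]
    exact (Ideal.Quotient.eq_zero_iff_mem).2 hev

/-- The chain construction: perturb a finite family of coefficients to be generic,
preserving gluing and cardinality. -/
lemma chain [Uncountable (B ⧸ M)] {Q₁ Q₂ : Ideal B}
    (hp1 : Q₁.IsPrime) (hp2 : Q₂.IsPrime) :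
    ∀ (n : ℕ) (aa mm : Fin n → B), (∀ i, mm i ∉ Q₁ ∧ mm i ∉ Q₂) →
    ∀ (A : Subring B), Infinite A → #A < #(B ⧸ M) → Glued Q₁ Q₂ A →
    ∃ (A' : Subring B) (αα : Fin n → B), A ≤ A' ∧ #A' = #A ∧ Glued Q₁ Q₂ A' ∧
      ∀ i, aa i + mm i * αα i ∈ A' := by
  intro n
  induction n with
  | zero =>
    intro aa mm _ A _ _ hGl
    exact ⟨A, fun i => i.elim0, le_refl A, rfl, hGl, fun i => i.elim0⟩
  | succ n ih =>
    intro aa mm hmm A hInf hA hGl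
    haveI := hInf
    obtain ⟨α₀, hg1, hg2⟩ := exists_gen hp1 hp2 A hA (hmm 0).1 (hmm 0).2 (aa 0)
    set A₁ := Subring.closure (↑A ∪ {aa 0 + mm 0 * α₀}) with hA₁
    have hAA₁ : A ≤ A₁ := fun x hx => Subring.subset_closure (Or.inl hx)
    have hcard₁ : #A₁ = #A := mk_closure_insert A _
    haveI hInf₁ : Infinite A₁ := by
      rw [Cardinal.infinite_iff, hcard₁, ← Cardinal.infinite_iff]; exact hInf
    have hGl₁ : Glued Q₁ Q₂ A₁ := glued_adjoin_gen hGl hg1 hg2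
    obtain ⟨A', αα', hle, hcard', hGl', hmem'⟩ :=
      ih (fun j => aa j.succ) (fun j => mm j.succ) (fun j => hmm j.succ) A₁ hInf₁
        (hcard₁ ▸ hA) hGl₁
    refine ⟨A', Fin.cons α₀ αα', le_trans hAA₁ hle, by rw [hcard', hcard₁], hGl', ?_⟩
    intro i
    induction i using Fin.cases with
    | zero => simpa using hle (Subring.subset_closure (Or.inr rfl))
    | succ j => simpa using hmem' j

end Local

/-- In a reduced Noetherian ring, for `t` in two minimal primes there is an
annihilator element outside both. -/
lemma exists_ann [IsNoetherianRing B] [IsReduced B] {Q₁ Q₂ : Ideal B}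
    (hQ₁ : Q₁ ∈ minimalPrimes B) (hQ₂ : Q₂ ∈ minimalPrimes B) {t : B}
    (h1 : t ∈ Q₁) (h2 : t ∈ Q₂) : ∃ m : B, m * t = 0 ∧ m ∉ Q₁ ∧ m ∉ Q₂ := by
  classical
  have hp1 : Q₁.IsPrime := hQ₁.1.1
  have hp2 : Q₂.IsPrime := hQ₂.1.1
  set F := (minimalPrimes.finite_of_isNoetherianRing B).toFinset with hF
  set G := F.filter (fun Q => t ∉ Q) with hGdef
  set J := G.inf id with hJ
  have hJt : ∀ x ∈ J, x * t = 0 := by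
    intro x hx
    have hxt : x * t ∈ sInf (minimalPrimes B) := by
      rw [Submodule.mem_sInf]
      intro P hP
      by_cases htP : t ∈ P
      · exact Ideal.mul_mem_left P x htP
      · have hPG : P ∈ G := by
          rw [hGdef, Finset.mem_filter]
          exact ⟨(minimalPrimes.finite_of_isNoetherianRing B).mem_toFinset.2 hP, htP⟩
        have hJP : J ≤ P := Finset.inf_le hPG
        exact Ideal.mul_mem_right t P (hJP hx)
    have : sInf (minimalPrimes B) = ⊥ := by
      rw [show minimalPrimes B = (⊥ : Ideal B).minimalPrimes from rfl,
        Ideal.sInf_minimalPrimes]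
      exact nilradical_eq_zero B
    rw [this] at hxt
    exact hxt
  have hnot : ∀ (Q : Ideal B), Q ∈ minimalPrimes B → t ∈ Q → ¬ J ≤ Q := by
    intro Q hQ htQ hle
    obtain ⟨P, hPG, hPle⟩ := (hQ.1.1.inf_le').1 hle
    rw [hGdef, Finset.mem_filter] at hPG
    have hPmin : P ∈ minimalPrimes B :=
      (minimalPrimes.finite_of_isNoetherianRing B).mem_toFinset.1 hPG.1
    have : Q ≤ P := hQ.2 ⟨hPmin.1.1, bot_le⟩ hPle
    exact hPG.2 (this htQ)
  have hunion : ¬ (J : Set B) ⊆ ↑Q₁ ∪ ↑Q₂ := by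
    intro h
    rcases (Ideal.subset_union).1 h with h | h
    · exact hnot Q₁ hQ₁ h1 h
    · exact hnot Q₂ hQ₂ h2 h
  obtain ⟨m, hmJ, hm⟩ := Set.not_subset.1 hunion
  simp only [Set.mem_union, SetLike.mem_coe, not_or] at hm
  exact ⟨m, hJt m hmJ, hm.1, hm.2⟩

end Aux12

/-- For an MG-subring `R`, a finitely generated ideal `I` of `R`, and `c ∈ IB ∩ R`,
there is a larger MG-subring `S` of the same cardinality with `c ∈ IS`. -/
theorem stmt_12 (B : Type*) [CommRing B] [IsNoetherianRing B] [IsLocalRing B] [IsReduced B]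
    [Uncountable (B ⧸ IsLocalRing.maximalIdeal B)]
    (Q₁ Q₂ : Ideal B) (hQ₁ : Q₁ ∈ minimalPrimes B) (hQ₂ : Q₂ ∈ minimalPrimes B)
    (hne : Q₁ ≠ Q₂)
    (R : Subring B) [Infinite ↥R]
    (hcard : Cardinal.mk ↥R < Cardinal.mk (B ⧸ IsLocalRing.maximalIdeal B))
    (hglue : ∀ y ∈ R, y ∈ Q₁ ↔ y ∈ Q₂)
    (I : Ideal ↥R) (hI : I.FG) (c : ↥R) (hc : (c : B) ∈ I.map R.subtype) :
    ∃ (S : Subring B) (hRS : R ≤ S),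
      Cardinal.mk ↥S = Cardinal.mk ↥R ∧
      (∀ y ∈ S, y ∈ Q₁ ↔ y ∈ Q₂) ∧
      (⟨(c : B), hRS c.2⟩ : ↥S) ∈ I.map (Subring.inclusion hRS) := by
  classical
  have hp1 : Q₁.IsPrime := hQ₁.1.1
  have hp2 : Q₂.IsPrime := hQ₂.1.1
  -- extract a finite representation of c over generators of I
  obtain ⟨s, hsI⟩ := hI
  have hmap : I.map R.subtype = Ideal.span (R.subtype '' ↑s) := by
    rw [← hsI, Ideal.map_span]
  rw [hmap, ← Finset.coe_image] at hc
  obtain ⟨f, -, hf⟩ := Submodule.mem_span_finset.1 hc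
  set u := s.image R.subtype with hu
  set n := u.card with hn
  set e : Fin n ≃ ↥u := u.equivFin.symm with he
  set τ : Fin n → B := fun i => ↑(e i) with hτ
  set a : Fin n → B := fun i => f (τ i) with ha
  have hsum : ∑ i, a i * τ i = (c : B) := by
    rw [← hf]
    rw [← Finset.sum_coe_sort u (fun b => f b • b)]
    rw [← Equiv.sum_comp e (fun x : ↥u => f (x : B) • (x : B))]
    simp [ha, τ, smul_eq_mul]
  have hτR : ∀ i, ∃ r : ↥R, r ∈ I ∧ (r : B) = τ i := by
    intro i
    have : (τ i) ∈ u := (e i).2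
    rw [hu, Finset.mem_image] at this
    obtain ⟨r, hrs, hr⟩ := this
    exact ⟨r, hsI ▸ Ideal.subset_span hrs, hr⟩
  choose t htI htτ using hτR
  have hτglue : ∀ i, τ i ∈ Q₁ ↔ τ i ∈ Q₂ := fun i =>
    (htτ i) ▸ hglue _ (t i).2
  -- the common final step
  have final : ∀ (S : Subring B) (hRS : R ≤ S) (cc : Fin n → B),
      (∀ i, cc i ∈ S) → (∑ i, cc i * τ i = (c : B)) →
      Cardinal.mk ↥S = Cardinal.mk ↥R → (∀ y ∈ S, y ∈ Q₁ ↔ y ∈ Q₂) →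
      ∃ (S : Subring B) (hRS : R ≤ S),
        Cardinal.mk ↥S = Cardinal.mk ↥R ∧
        (∀ y ∈ S, y ∈ Q₁ ↔ y ∈ Q₂) ∧
        (⟨(c : B), hRS c.2⟩ : ↥S) ∈ I.map (Subring.inclusion hRS) := by
    intro S hRS cc hccS hccsum hScard hSglue
    refine ⟨S, hRS, hScard, hSglue, ?_⟩
    have heq : (⟨(c : B), hRS c.2⟩ : ↥S) =
        ∑ i, (⟨cc i, hccS i⟩ : ↥S) * (Subring.inclusion hRS (t i)) := by
      apply Subtype.ext
      push_cast
      rw [← hccsum]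
      refine Finset.sum_congr rfl fun i _ => ?_
      congr 1
      rw [← htτ i]
      rfl
    rw [heq]
    exact Ideal.sum_mem _ fun i _ =>
      Ideal.mul_mem_left _ _ (Ideal.mem_map_of_mem _ (htI i))
  by_cases hcase : ∀ i, τ i ∈ Q₁
  · -- Case A: all generators in both minimal primes
    have hmm : ∀ i, ∃ m : B, m * τ i = 0 ∧ m ∉ Q₁ ∧ m ∉ Q₂ := fun i =>
      Aux12.exists_ann hQ₁ hQ₂ (hcase i) ((hτglue i).1 (hcase i))
    choose m hm0 hm1 hm2 using hmm
    obtain ⟨A', αα, hRA', hcardA', hgluedA', hmem⟩ :=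
      Aux12.chain hp1 hp2 n a m (fun i => ⟨hm1 i, hm2 i⟩) R inferInstance hcard hglue
    refine final A' hRA' (fun i => a i + m i * αα i) hmem ?_ hcardA' hgluedA'
    rw [← hsum]
    refine Finset.sum_congr rfl fun i _ => ?_
    have : m i * αα i * τ i = αα i * (m i * τ i) := by ring
    rw [add_mul, this, hm0 i, mul_zero, add_zero]
  · -- Case B: some generator outside both minimal primes
    push_neg at hcase
    obtain ⟨i₀, hi₀⟩ := hcase
    have hi₀' : τ i₀ ∉ Q₂ := fun h => hi₀ ((hτglue i₀).2 h)
    obtain ⟨A', αα, hRA', hcardA', hgluedA', hmem⟩ :=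
      Aux12.chain hp1 hp2 n a (fun _ => τ i₀) (fun _ => ⟨hi₀, hi₀'⟩) R inferInstance hcard hglue
    set b : B := a i₀ - ∑ i ∈ Finset.univ.erase i₀, τ i * αα i with hb
    set w : B := (c : B) - ∑ i ∈ Finset.univ.erase i₀, (a i + τ i₀ * αα i) * τ i with hw
    have hwA' : w ∈ A' := by
      refine A'.sub_mem (hRA' c.2) (Subring.sum_mem _ fun i _ => A'.mul_mem (hmem i) ?_)
      exact hRA' ((htτ i) ▸ (t i).2)
    have h0 : ∑ i ∈ Finset.univ.erase i₀, a i * τ i + a i₀ * τ i₀ = ∑ i, a i * τ i :=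
      Finset.sum_erase_add _ _ (Finset.mem_univ i₀)
    have hkey : τ i₀ * b = w := by
      have e1 : ∑ i ∈ Finset.univ.erase i₀, (a i + τ i₀ * αα i) * τ i =
          ∑ i ∈ Finset.univ.erase i₀, a i * τ i +
            ∑ i ∈ Finset.univ.erase i₀, τ i₀ * (τ i * αα i) := by
        rw [← Finset.sum_add_distrib]
        exact Finset.sum_congr rfl fun i _ => by ring
      have e2 : τ i₀ * b = τ i₀ * a i₀ - ∑ i ∈ Finset.univ.erase i₀, τ i₀ * (τ i * αα i) := by
        rw [hb, mul_sub, Finset.mul_sum]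
      rw [e2, hw, e1, ← hsum, ← h0]
      ring
    set S := Subring.closure (↑A' ∪ {b}) with hS
    have hA'S : A' ≤ S := fun x hx => Subring.subset_closure (Or.inl hx)
    have hbS : b ∈ S := Subring.subset_closure (Or.inr rfl)
    haveI hInfA' : Infinite A' := by
      rw [Cardinal.infinite_iff, hcardA', ← Cardinal.infinite_iff]; infer_instance
    have hScard : #S = #R := by
      rw [hS, Aux12.mk_closure_insert A' b, hcardA']
    have hSglue : ∀ y ∈ S, y ∈ Q₁ ↔ y ∈ Q₂ :=
      Aux12.glued_adjoin_mul hp1 hp2 hgluedA' (hRA' ((htτ i₀) ▸ (t i₀).2)) hwA'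
        hi₀ hi₀' hkey
    refine final S (le_trans hRA' hA'S) (fun i => if i = i₀ then b else a i + τ i₀ * αα i)
      ?_ ?_ hScard hSglue
    · intro i
      by_cases h : i = i₀
      · simpa [h] using hbS
      · simpa [h] using hA'S (hmem i)
    · have e5 : ∑ i, (if i = i₀ then b else a i + τ i₀ * αα i) * τ i
          = ∑ i ∈ Finset.univ.erase i₀, (if i = i₀ then b else a i + τ i₀ * αα i) * τ i
            + (if i₀ = i₀ then b else a i₀ + τ i₀ * αα i₀) * τ i₀ :=
        (Finset.sum_erase_add _ _ (Finset.mem_univ i₀)).symm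
      have e3 : ∑ i ∈ Finset.univ.erase i₀,
          (if i = i₀ then b else a i + τ i₀ * αα i) * τ i =
          ∑ i ∈ Finset.univ.erase i₀, (a i + τ i₀ * αα i) * τ i :=
        Finset.sum_congr rfl fun i hi => by rw [if_neg (Finset.ne_of_mem_erase hi)]
      rw [e5, e3, if_pos rfl]
      have e4 : b * τ i₀ = w := by rw [mul_comm]; exact hkey
      rw [e4, hw]
      ring
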